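/- Naive sub-MC reasoning is unsound for liveness properties: there exist a finite nonempty state type S, transition functions P, P' : S → S → ℝ of finite MCs, an initial state s0 : S, a set C ⊆ S with s0 ∈ C, a set G ⊆ S, and λ ∈ [0,1], such that P s t = P' s t for all s ∈ C and all t (so the sub-MCs with critical states C coincide), Prob_P(s0,G) ≤ λ (P violates the liveness property P_{>λ}(◇G)), yet Prob_{P'}(s0,G) > λ (P' satisfies it). -/

import Mathlib

open scoped Classical BigOperators

/-- `n`-step reachability probability `Pr_P^n(s, G)`. -/
noncomputable def Pr {S : Type*} [Fintype S] (P : S → S → ℝ) : ℕ → S → Set S → ℝ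
  | 0, s, G => if s ∈ G then 1 else 0
  | n + 1, s, G => if s ∈ G then 1 else ∑ t, P s t * Pr P n t G

/-- Reachability probability `Prob_P(s, G) = ⨆ n, Pr_P^n(s, G)`. -/
noncomputable def Prob {S : Type*} [Fintype S] (P : S → S → ℝ) (s : S) (G : Set S) : ℝ :=
  ⨆ n : ℕ, Pr P n s G

/-- `C`-restriction of `P`: states outside `C` are made absorbing. -/
noncomputable def restrictMC {S : Type*} (C : Set S) (P : S → S → ℝ) (s t : S) : ℝ :=
  if s ∈ C then P s t else (if t = s then 1 else 0)

/-- `n`-step probability of reaching `B` while avoiding `G`. -/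
noncomputable def APr {S : Type*} [Fintype S] (P : S → S → ℝ) : ℕ → S → Set S → Set S → ℝ
  | 0, s, B, _ => if s ∈ B then 1 else 0
  | n + 1, s, B, G => if s ∈ B then 1 else if s ∈ G then 0 else ∑ t, P s t * APr P n t B G

/-- `AProb_P(s, B, G) = ⨆ n, APr_P^n(s, B, G)`. -/
noncomputable def AProb {S : Type*} [Fintype S] (P : S → S → ℝ) (s : S) (B G : Set S) : ℝ :=
  ⨆ n : ℕ, APr P n s B G

/-- `s` has a path to `G` under `P`. -/
def HasPathTo {S : Type*} (P : S → S → ℝ) (s : S) (G : Set S) : Prop :=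
  ∃ (m : ℕ) (u : ℕ → S), u 0 = s ∧ (∀ i < m, 0 < P (u i) (u (i + 1))) ∧ u m ∈ G

/-- `B_P(G)`: the set of states with no path to `G` under `P`. -/
def BSet {S : Type*} (P : S → S → ℝ) (G : Set S) : Set S :=
  {s | ¬ HasPathTo P s G}

/-- Transition function `P_r` of the instantiated MC `D_r` of a family `𝔓`. -/
noncomputable def Pinst {S K : Type*} [Fintype K] (𝔓 : S → K → ℝ) (r : K → S) (s t : S) : ℝ :=
  ∑ k, if r k = t then 𝔓 s k else 0

/-- Parameter `k` occurs at some state of `C`. -/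
def OccursIn {S K : Type*} (𝔓 : S → K → ℝ) (C : Set S) (k : K) : Prop :=
  ∃ s ∈ C, 0 < 𝔓 s k

/-- `u` is reachable from `s0` under `P`. -/
def ReachableFrom {S : Type*} (P : S → S → ℝ) (s0 u : S) : Prop :=
  ∃ (m : ℕ) (v : ℕ → S), v 0 = s0 ∧ (∀ i < m, 0 < P (v i) (v (i + 1))) ∧ v m = u

lemma Pr_le_one {S : Type*} [Fintype S] (P : S → S → ℝ)
    (h0 : ∀ s t, 0 ≤ P s t) (h1 : ∀ s, ∑ t, P s t = 1) :
    ∀ (n : ℕ) (s : S) (G : Set S), Pr P n s G ≤ 1 := by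
  intro n
  induction n with
  | zero => intro s G; simp only [Pr]; split <;> norm_num
  | succ n ih =>
    intro s G
    simp only [Pr]
    split
    · exact le_refl 1
    · calc ∑ t, P s t * Pr P n t G ≤ ∑ t, P s t * 1 := by
            apply Finset.sum_le_sum
            intro t _
            exact mul_le_mul_of_nonneg_left (ih t G) (h0 s t)
        _ = 1 := by simp [h1 s]

/-- naive sub-MC reasoning is unsound for liveness properties. -/
theorem stmt_5 :
    ∃ (S : Type) (_ : Fintype S) (_ : Nonempty S) (P P' : S → S → ℝ)
      (s0 : S) (C : Set S) (G : Set S) (lam : ℝ),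
      (∀ s t, 0 ≤ P s t) ∧ (∀ s, ∑ t, P s t = 1) ∧
      (∀ s t, 0 ≤ P' s t) ∧ (∀ s, ∑ t, P' s t = 1) ∧
      s0 ∈ C ∧ 0 ≤ lam ∧ lam ≤ 1 ∧
      (∀ s ∈ C, ∀ t, P s t = P' s t) ∧
      Prob P s0 G ≤ lam ∧ Prob P' s0 G > lam := by
  classical
  refine ⟨Fin 3, inferInstance, inferInstance,
    (fun s t => if s = 2 then (if t = 2 then 1 else 0) else (if t = 1 then 1 else 0)),
    (fun s t => if s = 0 then (if t = 1 then 1 else 0) else (if t = 2 then 1 else 0)),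
    0, {0}, {2}, 1/2, ?_, ?_, ?_, ?_, ?_, ?_, ?_, ?_, ?_, ?_⟩
  · intro s t; dsimp only; split <;> split <;> norm_num
  · intro s; by_cases hs : s = 2 <;> simp [hs, Fin.sum_univ_three]
  · intro s t; dsimp only; split <;> split <;> norm_num
  · intro s; by_cases hs : s = 0 <;> simp [hs, Fin.sum_univ_three]
  · rfl
  · norm_num
  · norm_num
  · intro s hs t
    simp only [Set.mem_singleton_iff] at hs
    subst hs
    norm_num [Fin.ext_iff]
  · -- Prob P 0 {2} = 0 ≤ 1/2
    set P : Fin 3 → Fin 3 → ℝ :=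
      fun s t => if s = 2 then (if t = 2 then 1 else 0) else (if t = 1 then 1 else 0) with hP
    have key : ∀ n : ℕ, Pr P n 0 {2} = 0 ∧ Pr P n 1 {2} = 0 := by
      intro n
      induction n with
      | zero => constructor <;> simp [Pr]
      | succ n ih =>
        constructor <;>
        · simp only [Pr, Fin.sum_univ_three, hP]
          norm_num
          simp [ih.2]
          exact ih.2
    have : Prob P 0 {2} = 0 := by
      unfold Prob
      have : ∀ n : ℕ, Pr P n 0 {2} = 0 := fun n => (key n).1
      simp [this]
    rw [this]; norm_num
  · -- Prob P' 0 {2} = 1 > 1/2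
    set P' : Fin 3 → Fin 3 → ℝ :=
      fun s t => if s = 0 then (if t = 1 then 1 else 0) else (if t = 2 then 1 else 0) with hP'
    have h0 : ∀ s t, (0:ℝ) ≤ P' s t := by intro s t; simp only [hP']; split <;> split <;> norm_num
    have h1 : ∀ s, ∑ t, P' s t = 1 := by
      intro s; by_cases hs : s = 0 <;> simp [hP', hs, Fin.sum_univ_three]
    have h2 : Pr P' 2 0 {2} = 1 := by
      simp [Pr, Fin.sum_univ_three, hP']
    have hle : Prob P' 0 {2} ≥ 1 := by
      rw [← h2]
      have hb : BddAbove (Set.range fun n : ℕ => Pr P' n 0 ({2} : Set (Fin 3))) :=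
        ⟨1, by rintro x ⟨n, rfl⟩; simpa using Pr_le_one P' h0 h1 n 0 {2}⟩
      exact le_ciSup hb 2
    linarith
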